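/- Let M : (0,∞)×(0,∞) → (0,∞) be symmetric, increasing in each variable, and 1-homogeneous. If the function g(s) := M(s,1)/L(s,1) is increasing on [1,∞), where L is the logarithmic mean, then ρ_M(x,y) = |x−y|/M(x,y) satisfies the triangle inequality for all 0 < y < z < x: (x−y)/M(x,y) ≤ (x−z)/M(x,z) + (z−y)/M(z,y). -/

import Mathlib

/-- If `M` is symmetric, increasing, `1`-homogeneous and the ratio
`M(s,1)/L(s,1)` is increasing on `[1,∞)` (with `L` the logarithmic mean),
then `ρ_M` satisfies the triangle inequality for `0 < y < z < x`. -/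
theorem stmt_6 (M : ℝ → ℝ → ℝ)
    (hpos : ∀ x y, 0 < x → 0 < y → 0 < M x y)
    (hsymm : ∀ x y, 0 < x → 0 < y → M x y = M y x)
    (hmono : ∀ x, 0 < x → MonotoneOn (M x) (Set.Ioi 0))
    (hhom : ∀ t x y, 0 < t → 0 < x → 0 < y → M (t * x) (t * y) = t * M x y)
    (hg : MonotoneOn (fun s => M s 1 / ((s - 1) / Real.log s)) (Set.Ioi 1)) :
    ∀ x y z, 0 < y → y < z → z < x →
      (x - y) / M x y ≤ (x - z) / M x z + (z - y) / M z y := by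
  -- Key subadditivity lemma for f(u) = (u-1)/M(u,1)
  have key : ∀ s t : ℝ, 1 < s → 1 < t →
      (s * t - 1) / M (s * t) 1 ≤ (s - 1) / M s 1 + (t - 1) / M t 1 := by
    intro s t hs ht
    have hs0 : (0:ℝ) < s := lt_trans one_pos hs
    have ht0 : (0:ℝ) < t := lt_trans one_pos ht
    have hst : 1 < s * t := one_lt_mul hs.le ht
    have hst0 : (0:ℝ) < s * t := lt_trans one_pos hst
    have hls : 0 < Real.log s := Real.log_pos hs
    have hlt : 0 < Real.log t := Real.log_pos ht
    set G := fun u : ℝ => M u 1 / ((u - 1) / Real.log u) with hGdef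
    have hGpos : ∀ u : ℝ, 1 < u → 0 < G u := by
      intro u hu
      have hu0 : (0:ℝ) < u := lt_trans one_pos hu
      exact div_pos (hpos u 1 hu0 one_pos)
        (div_pos (by linarith) (Real.log_pos hu))
    have hf : ∀ u : ℝ, 1 < u → (u - 1) / M u 1 = Real.log u / G u := by
      intro u hu
      have hu0 : (0:ℝ) < u := lt_trans one_pos hu
      have h1 : Real.log u ≠ 0 := (Real.log_pos hu).ne'
      have h2 : M u 1 ≠ 0 := (hpos u 1 hu0 one_pos).ne'
      simp only [hGdef]
      field_simp
    rw [hf s hs, hf t ht, hf (s*t) hst,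
      Real.log_mul hs0.ne' ht0.ne', add_div]
    have hGs : G s ≤ G (s * t) :=
      hg (Set.mem_Ioi.mpr hs) (Set.mem_Ioi.mpr hst)
        (le_mul_of_one_le_right hs0.le ht.le)
    have hGt : G t ≤ G (s * t) :=
      hg (Set.mem_Ioi.mpr ht) (Set.mem_Ioi.mpr hst)
        (le_mul_of_one_le_left ht0.le hs.le)
    have h1 : Real.log s / G (s * t) ≤ Real.log s / G s := by
      apply div_le_div_of_nonneg_left hls.le (hGpos s hs) hGs
    have h2 : Real.log t / G (s * t) ≤ Real.log t / G t := by
      apply div_le_div_of_nonneg_left hlt.le (hGpos t ht) hGt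
    linarith
  intro x y z hy hyz hzx
  have hz : 0 < z := hy.trans hyz
  have hx : 0 < x := hz.trans hzx
  have hs : 1 < x / z := (one_lt_div hz).mpr hzx
  have ht : 1 < z / y := (one_lt_div hy).mpr hyz
  have hxy : x / z * (z / y) = x / y := by field_simp
  have hMxy : M x y = y * M (x / y) 1 := by
    have := hhom y (x / y) 1 hy (div_pos hx hy) one_pos
    rw [mul_div_cancel₀ _ hy.ne', mul_one] at this
    exact this
  have hMxz : M x z = z * M (x / z) 1 := by
    have := hhom z (x / z) 1 hz (div_pos hx hz) one_pos
    rw [mul_div_cancel₀ _ hz.ne', mul_one] at this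
    exact this
  have hMzy : M z y = y * M (z / y) 1 := by
    have := hhom y (z / y) 1 hy (div_pos hz hy) one_pos
    rw [mul_div_cancel₀ _ hy.ne', mul_one] at this
    exact this
  have e1 : (x - y) / M x y = (x / y - 1) / M (x / y) 1 := by
    rw [hMxy]
    have h2 : M (x / y) 1 ≠ 0 :=
      (hpos _ 1 (div_pos hx hy) one_pos).ne'
    field_simp
  have e2 : (x - z) / M x z = (x / z - 1) / M (x / z) 1 := by
    rw [hMxz]
    have h2 : M (x / z) 1 ≠ 0 :=
      (hpos _ 1 (div_pos hx hz) one_pos).ne'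
    field_simp
  have e3 : (z - y) / M z y = (z / y - 1) / M (z / y) 1 := by
    rw [hMzy]
    have h2 : M (z / y) 1 ≠ 0 :=
      (hpos _ 1 (div_pos hz hy) one_pos).ne'
    field_simp
  rw [e1, e2, e3, ← hxy]
  exact key _ _ hs ht
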